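/- Let K be a field, V a finite-dimensional K-vector space, and V1, V2 subspaces of V with V1 + V2 = V. Under the canonical nondegenerate pairing between ⋀²V and ⋀²(V*), the annihilator inside ⋀²V of the subspace V1⁰ ∧ V2⁰ of ⋀²(V*) (the span of all ξ ∧ η with ξ ∈ V1⁰ and η ∈ V2⁰) is exactly ⋀²V1 + ⋀²V2. (This is the key identity in the paper's proof of its Lemma 3.5.) -/

import Mathlib

open ExteriorAlgebra Module

section ExtSq

variable {K : Type*} [Field K]

variable (K) in
/-- The exterior square `⋀²M`, realized as the degree-2 component of the exterior
algebra of `M`. -/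
noncomputable def exteriorSquare (M : Type*) [AddCommGroup M] [Module K M] :
    Submodule K (ExteriorAlgebra K M) :=
  LinearMap.range (ι K : M →ₗ[K] ExteriorAlgebra K M) ^ 2

variable {V : Type*} [AddCommGroup V] [Module K V]

/-- For a subspace `W ⊆ V`, the image of `⋀²W` in `⋀²V` under the map induced by the
inclusion `W ↪ V` (the span of the products `ι u * ι w` with `u, w ∈ W`). -/
noncomputable def exteriorSquareOf (W : Submodule K V) : Submodule K (ExteriorAlgebra K V) :=
  LinearMap.range ((ι K : V →ₗ[K] ExteriorAlgebra K V) ∘ₗ W.subtype) ^ 2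

variable {M N : Type*} [AddCommGroup M] [Module K M] [AddCommGroup N] [Module K N]

/-- A bilinear map on `M` as a multilinear map on `Fin 2 → M`. -/
noncomputable def bilinToMulti (g : M →ₗ[K] M →ₗ[K] N) :
    MultilinearMap K (fun _ : Fin 2 => M) N :=
  LinearMap.uncurryLeft
    ((MultilinearMap.ofSubsingletonₗ K K M N (0 : Fin 1)).toLinearMap ∘ₗ g)

/-- The alternating map on `Fin 2 → M` associated to a bilinear map `g` vanishing on
the diagonal; on a pair `(u, w)` it is `g u w`. -/
noncomputable def altOfBilin (g : M →ₗ[K] M →ₗ[K] N) (hg : ∀ v, g v v = 0) :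
    M [⋀^Fin 2]→ₗ[K] N where
  toMultilinearMap := bilinToMulti g
  map_eq_zero_of_eq' := by
    intro v i j hv hij
    have h01 : v 0 = v 1 := by
      fin_cases i <;> fin_cases j <;> simp_all
    show bilinToMulti g v = 0
    show g (v 0) (v 1) = 0
    rw [h01, hg]

@[simp] lemma altOfBilin_apply (g : M →ₗ[K] M →ₗ[K] N) (hg : ∀ v, g v v = 0)
    (v : Fin 2 → M) : altOfBilin g hg v = g (v 0) (v 1) := rfl

variable (V) in
/-- The bilinear map `(u, w) ↦ ξ(u)η(w) − ξ(w)η(u)` on `V`, for `ξ, η ∈ V*`. -/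
noncomputable def innerBilin (ξ η : Dual K V) : V →ₗ[K] V →ₗ[K] K :=
  LinearMap.mk₂ K (fun u w => ξ u * η w - ξ w * η u)
    (fun u₁ u₂ w => by simp; ring)
    (fun c u w => by simp; ring)
    (fun u w₁ w₂ => by simp; ring)
    (fun c u w => by simp; ring)

variable (V) in
/-- The alternating form `(u, w) ↦ ξ(u)η(w) − ξ(w)η(u)` on `V`. -/
noncomputable def innerAlt (ξ η : Dual K V) : V [⋀^Fin 2]→ₗ[K] K :=
  altOfBilin (innerBilin V ξ η) (fun v => by simp [innerBilin])

variable (K V) in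
/-- Extension of an alternating 2-form on `V` to a linear functional on the exterior
algebra, supported in degree 2. -/
noncomputable def liftDeg2 : (V [⋀^Fin 2]→ₗ[K] K) →ₗ[K] (ExteriorAlgebra K V →ₗ[K] K) :=
  ExteriorAlgebra.liftAlternating ∘ₗ
    LinearMap.single K (fun i => V [⋀^Fin i]→ₗ[K] K) 2

lemma innerAlt_add_left (ξ₁ ξ₂ η : Dual K V) :
    innerAlt V (ξ₁ + ξ₂) η = innerAlt V ξ₁ η + innerAlt V ξ₂ η := by
  ext v; simp [innerAlt, innerBilin]; ring

lemma innerAlt_smul_left (c : K) (ξ η : Dual K V) :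
    innerAlt V (c • ξ) η = c • innerAlt V ξ η := by
  ext v; simp [innerAlt, innerBilin]; ring

lemma innerAlt_add_right (ξ η₁ η₂ : Dual K V) :
    innerAlt V ξ (η₁ + η₂) = innerAlt V ξ η₁ + innerAlt V ξ η₂ := by
  ext v; simp [innerAlt, innerBilin]; ring

lemma innerAlt_smul_right (c : K) (ξ η : Dual K V) :
    innerAlt V ξ (c • η) = c • innerAlt V ξ η := by
  ext v; simp [innerAlt, innerBilin]; ring

lemma innerAlt_self (ξ : Dual K V) : innerAlt V ξ ξ = 0 := by
  ext v; simp [innerAlt, innerBilin]; ring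

variable (K V) in
/-- The canonical pairing, as a bilinear map `V* → V* → (⋀V)*`, sending `(ξ, η)` to the
functional determined in degree 2 by `u ∧ w ↦ ξ(u)η(w) − ξ(w)η(u)`. -/
noncomputable def pairingBilin :
    Dual K V →ₗ[K] Dual K V →ₗ[K] (ExteriorAlgebra K V →ₗ[K] K) :=
  LinearMap.mk₂ K (fun ξ η => liftDeg2 K V (innerAlt V ξ η))
    (fun ξ₁ ξ₂ η => by (try dsimp only); rw [innerAlt_add_left, map_add])
    (fun c ξ η => by (try dsimp only); rw [innerAlt_smul_left, map_smul])
    (fun ξ η₁ η₂ => by (try dsimp only); rw [innerAlt_add_right, map_add])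
    (fun c ξ η => by (try dsimp only); rw [innerAlt_smul_right, map_smul])

variable (K V) in
/-- The canonical pairing between the exterior algebra of `V*` and that of `V`,
which in degree 2 restricts to the canonical nondegenerate pairing
`⟨ξ ∧ η, u ∧ w⟩ = ξ(u)η(w) − ξ(w)η(u)` between `⋀²(V*)` and `⋀²V`. -/
noncomputable def extPairing :
    ExteriorAlgebra K (Dual K V) →ₗ[K] (ExteriorAlgebra K V →ₗ[K] K) :=
  ExteriorAlgebra.liftAlternating
    (Pi.single 2 (altOfBilin (pairingBilin K V)
      (fun ξ => by
        simp only [pairingBilin, LinearMap.mk₂_apply, innerAlt_self, map_zero])))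

end ExtSq

set_option maxHeartbeats 1000000
set_option synthInstance.maxHeartbeats 1000000

set_option synthInstance.maxHeartbeats 1000000
set_option maxHeartbeats 1000000
section Aux
open ExteriorAlgebra Module
variable {K V : Type*} [Field K] [AddCommGroup V] [Module K V]

lemma liftDeg2_ι_mul_ι (f : V [⋀^Fin 2]→ₗ[K] K) (u w : V) :
    liftDeg2 K V f (ι K u * ι K w) = f ![u, w] := by
  rw [liftDeg2, LinearMap.comp_apply, liftAlternating_ι_mul, liftAlternating_ι]
  rfl

lemma extPairing_ι_mul (ξ η : Module.Dual K V) :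
    extPairing K V (ι K ξ * ι K η) = liftDeg2 K V (innerAlt V ξ η) := by
  rw [extPairing, liftAlternating_ι_mul, liftAlternating_ι]
  rfl

lemma extPairing_ι_mul_ι (ξ η : Module.Dual K V) (u w : V) :
    extPairing K V (ι K ξ * ι K η) (ι K u * ι K w) = ξ u * η w - ξ w * η u := by
  rw [extPairing_ι_mul, liftDeg2_ι_mul_ι]
  rfl

end Aux
section Aux2
open ExteriorAlgebra Module
variable {K V : Type*} [Field K] [AddCommGroup V] [Module K V]

lemma mul_mem_exteriorSquareOf {W : Submodule K V} {u w : V} (hu : u ∈ W) (hw : w ∈ W) :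
    ι K u * ι K w ∈ exteriorSquareOf W := by
  rw [exteriorSquareOf, pow_two]
  exact Submodule.mul_mem_mul ⟨⟨u, hu⟩, rfl⟩ ⟨⟨w, hw⟩, rfl⟩

lemma extPairing_eq_zero_left {V1 : Submodule K V} {ξ η : Module.Dual K V}
    (hξ : ξ ∈ V1.dualAnnihilator) {p : ExteriorAlgebra K V} (hp : p ∈ exteriorSquareOf V1) :
    extPairing K V (ι K ξ * ι K η) p = 0 := by
  rw [exteriorSquareOf, pow_two] at hp
  refine Submodule.mul_induction_on hp ?_ ?_
  · rintro _ ⟨u, rfl⟩ _ ⟨w, rfl⟩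
    rw [Submodule.mem_dualAnnihilator] at hξ
    rw [LinearMap.comp_apply, LinearMap.comp_apply, extPairing_ι_mul_ι]
    simp only [Submodule.subtype_apply]
    rw [hξ _ (Submodule.coe_mem u), hξ _ (Submodule.coe_mem w)]
    ring
  · intro x y hx hy; rw [map_add, hx, hy, add_zero]

lemma extPairing_eq_zero_right {V2 : Submodule K V} {ξ η : Module.Dual K V}
    (hη : η ∈ V2.dualAnnihilator) {p : ExteriorAlgebra K V} (hp : p ∈ exteriorSquareOf V2) :
    extPairing K V (ι K ξ * ι K η) p = 0 := by
  rw [exteriorSquareOf, pow_two] at hp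
  refine Submodule.mul_induction_on hp ?_ ?_
  · rintro _ ⟨u, rfl⟩ _ ⟨w, rfl⟩
    rw [Submodule.mem_dualAnnihilator] at hη
    rw [LinearMap.comp_apply, LinearMap.comp_apply, extPairing_ι_mul_ι]
    simp only [Submodule.subtype_apply]
    rw [hη _ (Submodule.coe_mem u), hη _ (Submodule.coe_mem w)]
    ring
  · intro x y hx hy; rw [map_add, hx, hy, add_zero]

lemma extPairing_sup_zero {V1 V2 : Submodule K V} {ξ η : Module.Dual K V}
    (hξ : ξ ∈ V1.dualAnnihilator) (hη : η ∈ V2.dualAnnihilator)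
    {p : ExteriorAlgebra K V} (hp : p ∈ exteriorSquareOf V1 ⊔ exteriorSquareOf V2) :
    extPairing K V (ι K ξ * ι K η) p = 0 := by
  rw [Submodule.mem_sup] at hp
  obtain ⟨p1, hp1, p2, hp2, rfl⟩ := hp
  rw [map_add, extPairing_eq_zero_left hξ hp1, extPairing_eq_zero_right hη hp2, add_zero]

lemma exists_compl_le (V1 V2 : Submodule K V) (hspan : V1 ⊔ V2 = ⊤) :
    ∃ A : Submodule K V, A ≤ V1 ∧ IsCompl A V2 := by
  obtain ⟨A', hA'⟩ := Submodule.exists_isCompl (Submodule.comap V1.subtype (V1 ⊓ V2))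
  refine ⟨A'.map V1.subtype, Submodule.map_subtype_le _ _, ?_, ?_⟩
  · rw [Submodule.disjoint_def]
    rintro x ⟨a', ha', rfl⟩ hx2
    have hm : a' ∈ Submodule.comap V1.subtype (V1 ⊓ V2) := ⟨a'.2, hx2⟩
    have : a' = 0 := Submodule.disjoint_def.mp hA'.symm.disjoint a' ha' hm
    rw [this]; rfl
  · rw [codisjoint_iff, eq_top_iff, ← hspan]
    refine sup_le ?_ le_sup_right
    intro x hx
    have hx' : (⟨x, hx⟩ : V1) ∈ Submodule.comap V1.subtype (V1 ⊓ V2) ⊔ A' :=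
      hA'.codisjoint.eq_top ▸ Submodule.mem_top
    rw [Submodule.mem_sup] at hx'
    obtain ⟨b', hb', a', ha', hsum⟩ := hx'
    rw [Submodule.mem_sup]
    refine ⟨(a' : V), ⟨a', ha', rfl⟩, (b' : V), hb'.2, ?_⟩
    have := congrArg (V1.subtype) hsum
    simpa [add_comm] using this

end Aux2


set_option synthInstance.maxHeartbeats 400000 in
/-- **The key identity in the proof of Lemma 3.5 of Goodearl–Yakimov.**  Let `V` be a
finite-dimensional vector space over a field `K` and `V1, V2` subspaces with
`V1 + V2 = V`.  Under the canonical nondegenerate pairing between `⋀²V` and `⋀²(V*)`,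
the annihilator inside `⋀²V` of the subspace `V1⁰ ∧ V2⁰ ⊆ ⋀²(V*)` (the span of all
`ξ ∧ η` with `ξ ∈ V1⁰`, `η ∈ V2⁰`) is exactly `⋀²V1 + ⋀²V2`. -/
theorem annihilator_wedge_dualAnnihilators {K V : Type*} [Field K] [AddCommGroup V]
    [Module K V] [FiniteDimensional K V] (V1 V2 : Submodule K V) (hspan : V1 ⊔ V2 = ⊤)
    (π : ExteriorAlgebra K V) (hπ : π ∈ exteriorSquare K V) :
    (∀ s ∈ Submodule.span K {z : ExteriorAlgebra K (Dual K V) |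
        ∃ ξ ∈ V1.dualAnnihilator, ∃ η ∈ V2.dualAnnihilator, z = ι K ξ * ι K η},
      extPairing K V s π = 0) ↔
      π ∈ exteriorSquareOf V1 ⊔ exteriorSquareOf V2 := by
  classical
  constructor
  · intro hann
    obtain ⟨A, hAle, hAcompl⟩ := exists_compl_le V1 V2 hspan
    obtain ⟨C, hCle, hCcompl'⟩ := exists_compl_le V2 V1 (by rwa [sup_comm])
    have hCcompl : IsCompl V1 C := hCcompl'.symm
    let bA := Module.finBasis K A
    let bC := Module.finBasis K C
    set nA := Module.finrank K A with hnA
    set nC := Module.finrank K C with hnC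
    let aV : Fin nA → V := fun α => (bA α : V)
    let cV : Fin nC → V := fun γ => (bC γ : V)
    let e : Fin nA × Fin nC → ExteriorAlgebra K V := fun p => ι K (aV p.1) * ι K (cV p.2)
    set M := Submodule.span K (Set.range e) with hM
    have hAspan : Submodule.span K (Set.range aV) = A := by
      have h1 : Set.range aV = A.subtype '' Set.range bA := by
        rw [← Set.range_comp]; rfl
      rw [h1, ← Submodule.map_span, bA.span_eq, Submodule.map_top, Submodule.range_subtype]
    have hCspan : Submodule.span K (Set.range cV) = C := by
      have h1 : Set.range cV = C.subtype '' Set.range bC := by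
        rw [← Set.range_comp]; rfl
      rw [h1, ← Submodule.map_span, bC.span_eq, Submodule.map_top, Submodule.range_subtype]
    have hMgen : ∀ a ∈ A, ∀ c ∈ C, ι K a * ι K c ∈ M := by
      have step1 : ∀ γ : Fin nC, ∀ a ∈ A, ι K a * ι K (cV γ) ∈ M := by
        intro γ a ha
        have h : Submodule.span K (Set.range aV) ≤
            M.comap ((LinearMap.mulRight K (ι K (cV γ))).comp (ι K : V →ₗ[K] _)) := by
          rw [Submodule.span_le]
          rintro _ ⟨α, rfl⟩
          simp only [SetLike.mem_coe, Submodule.mem_comap, LinearMap.comp_apply,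
            LinearMap.mulRight_apply]
          exact Submodule.subset_span ⟨(α, γ), rfl⟩
        have := h (show a ∈ _ by rw [hAspan]; exact ha)
        simpa using this
      intro a ha c hc
      have h : Submodule.span K (Set.range cV) ≤
          M.comap ((LinearMap.mulLeft K (ι K a)).comp (ι K : V →ₗ[K] _)) := by
        rw [Submodule.span_le]
        rintro _ ⟨γ, rfl⟩
        simp only [SetLike.mem_coe, Submodule.mem_comap, LinearMap.comp_apply,
          LinearMap.mulLeft_apply]
        exact step1 γ a ha
      have := h (show c ∈ _ by rw [hCspan]; exact hc)
      simpa using this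
    have key : ∀ x : V, ∀ c ∈ C, ι K x * ι K c ∈
        (exteriorSquareOf V1 ⊔ exteriorSquareOf V2) ⊔ M := by
      intro x c hc
      obtain ⟨a, ha, v2, hv2, rfl⟩ := Submodule.mem_sup.mp
        (hAcompl.codisjoint.eq_top ▸ Submodule.mem_top : x ∈ A ⊔ V2)
      rw [map_add, add_mul]
      refine Submodule.add_mem _ ?_ ?_
      · exact Submodule.mem_sup_right (hMgen a ha c hc)
      · exact Submodule.mem_sup_left
          (Submodule.mem_sup_right (mul_mem_exteriorSquareOf hv2 (hCle hc)))
    have hdecomp : π ∈ (exteriorSquareOf V1 ⊔ exteriorSquareOf V2) ⊔ M := by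
      refine ?_
      have hle : exteriorSquare K V ≤ (exteriorSquareOf V1 ⊔ exteriorSquareOf V2) ⊔ M := by
        rw [exteriorSquare, pow_two, Submodule.mul_le]
        rintro _ ⟨u, rfl⟩ _ ⟨w, rfl⟩
        obtain ⟨u1, hu1, uc, huc, rfl⟩ := Submodule.mem_sup.mp
          (hCcompl.codisjoint.eq_top ▸ Submodule.mem_top : u ∈ V1 ⊔ C)
        obtain ⟨w1, hw1, wc, hwc, rfl⟩ := Submodule.mem_sup.mp
          (hCcompl.codisjoint.eq_top ▸ Submodule.mem_top : w ∈ V1 ⊔ C)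
        rw [map_add, map_add, add_mul, mul_add, mul_add]
        refine Submodule.add_mem _ (Submodule.add_mem _ ?_ ?_) (Submodule.add_mem _ ?_ ?_)
        · exact Submodule.mem_sup_left
            (Submodule.mem_sup_left (mul_mem_exteriorSquareOf hu1 hw1))
        · exact key u1 wc hwc
        · have heq : ι K uc * ι K w1 = -(ι K w1 * ι K uc) :=
            eq_neg_of_add_eq_zero_left (ExteriorAlgebra.ι_add_mul_swap uc w1)
          rw [heq]
          exact Submodule.neg_mem _ (key w1 uc huc)
        · exact Submodule.mem_sup_left
            (Submodule.mem_sup_right (mul_mem_exteriorSquareOf (hCle huc) (hCle hwc)))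
      exact hle hπ
    obtain ⟨σ, hσ, μ, hμ, rfl⟩ := Submodule.mem_sup.mp hdecomp
    obtain ⟨m, hm⟩ := (Submodule.mem_span_range_iff_exists_fun K).mp (hM ▸ hμ)
    let projC := C.projectionOnto V1 hCcompl.symm
    let projA := A.projectionOnto V2 hAcompl
    let ξf : Fin nC → Dual K V := fun γ => (bC.coord γ).comp projC
    let ηf : Fin nA → Dual K V := fun α => (bA.coord α).comp projA
    have hξmem : ∀ γ, ξf γ ∈ V1.dualAnnihilator := by
      intro γ
      rw [Submodule.mem_dualAnnihilator]
      intro w hw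
      simp [ξf, projC, Submodule.projectionOnto_apply_of_mem_right hCcompl.symm hw]
    have hηmem : ∀ α, ηf α ∈ V2.dualAnnihilator := by
      intro α
      rw [Submodule.mem_dualAnnihilator]
      intro w hw
      simp [ηf, projA, Submodule.projectionOnto_apply_of_mem_right hAcompl hw]
    have hξa : ∀ γ β, ξf γ (aV β) = 0 := fun γ β =>
      (Submodule.mem_dualAnnihilator (ξf γ)).mp (hξmem γ) _ (hAle (Submodule.coe_mem (bA β)))
    have hηc : ∀ α δ, ηf α (cV δ) = 0 := fun α δ =>
      (Submodule.mem_dualAnnihilator (ηf α)).mp (hηmem α) _ (hCle (Submodule.coe_mem (bC δ)))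
    have hξc : ∀ γ δ, ξf γ (cV δ) = if δ = γ then 1 else 0 := by
      intro γ δ
      simp [ξf, projC, cV, Submodule.projectionOnto_apply_left,
        Basis.coord_apply, Basis.repr_self, Finsupp.single_apply]
    have hηa : ∀ α β, ηf α (aV β) = if β = α then 1 else 0 := by
      intro α β
      simp [ηf, projA, aV, Submodule.projectionOnto_apply_left,
        Basis.coord_apply, Basis.repr_self, Finsupp.single_apply]
    have hmzero : ∀ p : Fin nA × Fin nC, m p = 0 := by
      rintro ⟨α, γ⟩
      have hs : ι K (ξf γ) * ι K (ηf α) ∈ Submodule.span K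
          {z : ExteriorAlgebra K (Dual K V) |
            ∃ ξ ∈ V1.dualAnnihilator, ∃ η ∈ V2.dualAnnihilator, z = ι K ξ * ι K η} :=
        Submodule.subset_span ⟨ξf γ, hξmem γ, ηf α, hηmem α, rfl⟩
      have h0 := hann _ hs
      rw [map_add, extPairing_sup_zero (hξmem γ) (hηmem α) hσ, zero_add] at h0
      rw [← hm, map_sum] at h0
      have hterm : ∀ q : Fin nA × Fin nC,
          extPairing K V (ι K (ξf γ) * ι K (ηf α)) (m q • e q) =
            if q = (α, γ) then -(m q) else 0 := by
        intro q
        rw [map_smul, smul_eq_mul, extPairing_ι_mul_ι, hξa, hηc, hξc, hηa]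
        by_cases h1 : q.1 = α <;> by_cases h2 : q.2 = γ <;>
          simp [Prod.ext_iff, h1, h2]
      rw [Finset.sum_congr rfl (fun q _ => hterm q),
        Finset.sum_ite_eq' Finset.univ ((α, γ) : Fin nA × Fin nC)] at h0
      simpa using h0
    have hμ0 : μ = 0 := by
      rw [← hm]
      exact Finset.sum_eq_zero fun p _ => by rw [hmzero p, zero_smul]
    rw [hμ0, add_zero]
    exact hσ
  · intro hmem s hs
    refine Submodule.span_induction ?_ ?_ ?_ ?_ hs
    · rintro z ⟨ξ, hξ, η, hη, rfl⟩
      exact extPairing_sup_zero hξ hη hmem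
    · simp
    · intro x y hx hy hx0 hy0
      rw [map_add, LinearMap.add_apply, hx0, hy0, add_zero]
    · intro c x hx hx0
      rw [map_smul, LinearMap.smul_apply, hx0, smul_zero]
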